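/- For any n ∈ ℕ and any choice of signs ε_R ∈ {-1,+1} indexed by dyadic rectangles R ⊆ [0,1)² of area 2^{-n}, the supremum over [0,1)² of |Σ_{|R|=2^{-n}} ε_R h_R(x)| is exactly n+1. -/

import Mathlib

open Finset

/-- The L^∞-normalized Haar function of the dyadic interval `[m/2^k, (m+1)/2^k)`:
`-1` on the left half, `+1` on the right half, `0` outside. -/
noncomputable def haar (k m : ℕ) (x : ℝ) : ℝ :=
  if (m : ℝ) / 2 ^ k ≤ x ∧ x < ((m : ℝ) + 1) / 2 ^ k then
    (if x < (2 * (m : ℝ) + 1) / 2 ^ (k + 1) then -1 else 1)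
  else 0

/-- The Haar function of the dyadic rectangle `[m₁/2^k₁,(m₁+1)/2^k₁) × [m₂/2^k₂,(m₂+1)/2^k₂)`. -/
noncomputable def haar2 (k₁ m₁ k₂ m₂ : ℕ) (p : ℝ × ℝ) : ℝ :=
  haar k₁ m₁ p.1 * haar k₂ m₂ p.2

/-- The hyperbolic Haar sum `∑_{|R| = 2^{-n}} α_R h_R` over dyadic rectangles of area `2^{-n}`. -/
noncomputable def sbSum (n : ℕ) (α : ℕ → ℕ → ℕ → ℝ) (p : ℝ × ℝ) : ℝ :=
  ∑ k ∈ Finset.range (n + 1), ∑ m₁ ∈ Finset.range (2 ^ k),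
    ∑ m₂ ∈ Finset.range (2 ^ (n - k)), α k m₁ m₂ * haar2 k m₁ (n - k) m₂ p

/-- The unit square `[0,1)²`. -/
def unitSq : Set (ℝ × ℝ) := Set.Ico (0 : ℝ) 1 ×ˢ Set.Ico (0 : ℝ) 1

/- ## Auxiliary lemmas -/

lemma haar_abs_le (k m : ℕ) (x : ℝ) : |haar k m x| ≤ 1 := by
  unfold haar; split_ifs <;> simp

lemma haar_mem {k m : ℕ} {x : ℝ} (h : haar k m x ≠ 0) :
    (m : ℝ) / 2 ^ k ≤ x ∧ x < ((m : ℝ) + 1) / 2 ^ k := by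
  by_contra hc
  exact h (by unfold haar; rw [if_neg hc])

lemma haar_unique {k m m' : ℕ} {x : ℝ} (h : haar k m x ≠ 0) (h' : haar k m' x ≠ 0) :
    m = m' := by
  obtain ⟨h1, h2⟩ := haar_mem h
  obtain ⟨h1', h2'⟩ := haar_mem h'
  have hk : (0 : ℝ) < 2 ^ k := by positivity
  rw [div_le_iff₀ hk] at h1 h1'
  rw [lt_div_iff₀ hk] at h2 h2'
  have c1 : (m : ℝ) < (m' : ℝ) + 1 := by linarith
  have c2 : (m' : ℝ) < (m : ℝ) + 1 := by linarith
  have d1 : m < m' + 1 := by exact_mod_cast c1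
  have d2 : m' < m + 1 := by exact_mod_cast c2
  omega

lemma sum_haar_abs_le (k N : ℕ) (g : ℕ → ℝ) (hg : ∀ m, |g m| ≤ 1) (x : ℝ) :
    |∑ m ∈ Finset.range N, g m * haar k m x| ≤ 1 := by
  by_cases h : ∃ m₀ ∈ Finset.range N, haar k m₀ x ≠ 0
  · obtain ⟨m₀, hm₀, hne⟩ := h
    rw [Finset.sum_eq_single m₀ (fun m hm hne' => ?_) (fun h => absurd hm₀ h)]
    · calc |g m₀ * haar k m₀ x| = |g m₀| * |haar k m₀ x| := abs_mul _ _
        _ ≤ 1 * 1 := mul_le_mul (hg m₀) (haar_abs_le k m₀ x) (abs_nonneg _) zero_le_one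
        _ = 1 := one_mul 1
    · rcases eq_or_ne (haar k m x) 0 with h0 | h0
      · rw [h0, mul_zero]
      · exact absurd (haar_unique h0 hne) hne'
  · push_neg at h
    rw [Finset.sum_eq_zero (fun m hm => by rw [h m hm, mul_zero])]
    simp

lemma sbSum_abs_le (n : ℕ) (ε : ℕ → ℕ → ℕ → ℝ)
    (hε : ∀ k m₁ m₂, ε k m₁ m₂ = 1 ∨ ε k m₁ m₂ = -1) (p : ℝ × ℝ) :
    |sbSum n ε p| ≤ n + 1 := by
  have habs : ∀ k m₁ m₂, |ε k m₁ m₂| ≤ 1 := by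
    intro k m₁ m₂; rcases hε k m₁ m₂ with h | h <;> rw [h] <;> norm_num
  unfold sbSum
  calc |∑ k ∈ Finset.range (n + 1), ∑ m₁ ∈ Finset.range (2 ^ k),
          ∑ m₂ ∈ Finset.range (2 ^ (n - k)), ε k m₁ m₂ * haar2 k m₁ (n - k) m₂ p|
      ≤ ∑ k ∈ Finset.range (n + 1), |∑ m₁ ∈ Finset.range (2 ^ k),
          ∑ m₂ ∈ Finset.range (2 ^ (n - k)), ε k m₁ m₂ * haar2 k m₁ (n - k) m₂ p| :=
        Finset.abs_sum_le_sum_abs _ _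
    _ ≤ ∑ _k ∈ Finset.range (n + 1), (1 : ℝ) := by
        apply Finset.sum_le_sum
        intro k _
        have hrw : ∀ m₁, ∑ m₂ ∈ Finset.range (2 ^ (n - k)),
            ε k m₁ m₂ * haar2 k m₁ (n - k) m₂ p
            = (∑ m₂ ∈ Finset.range (2 ^ (n - k)), ε k m₁ m₂ * haar (n - k) m₂ p.2)
              * haar k m₁ p.1 := by
          intro m₁
          rw [Finset.sum_mul]
          apply Finset.sum_congr rfl
          intro m₂ _
          unfold haar2
          ring
        rw [Finset.sum_congr rfl (fun m₁ _ => hrw m₁)]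
        apply sum_haar_abs_le
        intro m₁
        apply sum_haar_abs_le
        intro m₂
        exact habs k m₁ m₂
    _ = n + 1 := by simp
/- ## The extremal point -/

open Classical in
/-- Greedy choice of dyadic intervals: `Mseq ε k` is the index of the interval of length
`2^{-k}` chosen at step `k`. -/
noncomputable def Mseq (ε : ℕ → ℕ → ℕ → ℝ) : ℕ → ℕ
  | 0 => 0
  | k + 1 => 2 * Mseq ε k + (if ε k (Mseq ε k) 0 = 1 then 0 else 1)

lemma Mseq_sandwich (ε : ℕ → ℕ → ℕ → ℝ) (k j : ℕ) :
    Mseq ε k * 2 ^ j ≤ Mseq ε (k + j) ∧ Mseq ε (k + j) < (Mseq ε k + 1) * 2 ^ j := by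
  induction j with
  | zero => simp
  | succ j ih =>
    obtain ⟨h1, h2⟩ := ih
    classical
    have he : Mseq ε (k + (j + 1)) = 2 * Mseq ε (k + j)
        + (if ε (k + j) (Mseq ε (k + j)) 0 = 1 then 0 else 1) := rfl
    have hb : (if ε (k + j) (Mseq ε (k + j)) 0 = 1 then (0 : ℕ) else 1) ≤ 1 := by
      split <;> omega
    have hp : (2 : ℕ) ^ (j + 1) = 2 ^ j * 2 := pow_succ 2 j
    constructor
    · rw [he, hp, ← mul_assoc]; omega
    · rw [he, hp, ← mul_assoc]; omega

lemma Mseq_lt (ε : ℕ → ℕ → ℕ → ℝ) (k : ℕ) : Mseq ε k < 2 ^ k := by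
  have := (Mseq_sandwich ε 0 k).2
  simpa [Mseq] using this

lemma haar_zero_of_ne (j m : ℕ) (hm : m ≠ 0) : haar j m 0 = 0 := by
  unfold haar
  rw [if_neg]
  rintro ⟨h1, -⟩
  have hm' : (0 : ℝ) < (m : ℝ) / 2 ^ j := by
    apply div_pos _ (by positivity)
    exact_mod_cast Nat.pos_of_ne_zero hm
  linarith

lemma haar_zero_zero (j : ℕ) : haar j 0 0 = -1 := by
  unfold haar
  rw [if_pos, if_pos]
  · positivity
  · constructor
    · simp
    · positivity

lemma haar_Mseq (ε : ℕ → ℕ → ℕ → ℝ) (hε : ∀ k m₁ m₂, ε k m₁ m₂ = 1 ∨ ε k m₁ m₂ = -1)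
    (n k : ℕ) (hk : k ≤ n) :
    haar k (Mseq ε k) ((Mseq ε (n + 1) : ℝ) / 2 ^ (n + 1)) = -(ε k (Mseq ε k) 0) := by
  classical
  have hs := Mseq_sandwich ε k (n + 1 - k)
  have hkk : k + (n + 1 - k) = n + 1 := by omega
  rw [hkk] at hs
  have h1 : (Mseq ε k : ℝ) * 2 ^ (n + 1 - k) ≤ (Mseq ε (n + 1) : ℝ) := by
    exact_mod_cast hs.1
  have h2 : (Mseq ε (n + 1) : ℝ) < ((Mseq ε k : ℝ) + 1) * 2 ^ (n + 1 - k) := by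
    have := hs.2; push_cast at this ⊢; exact_mod_cast this
  have hpk : (0 : ℝ) < 2 ^ k := by positivity
  have hpk1 : (0 : ℝ) < 2 ^ (k + 1) := by positivity
  have hpN : (0 : ℝ) < 2 ^ (n + 1) := by positivity
  have hsplit : (2 : ℝ) ^ (n + 1) = 2 ^ k * 2 ^ (n + 1 - k) := by
    rw [← pow_add]; congr 1; omega
  have hsplit2 : (2 : ℝ) ^ (n + 1) = 2 ^ (k + 1) * 2 ^ (n - k) := by
    rw [← pow_add]; congr 1; omega
  have hcond : (Mseq ε k : ℝ) / 2 ^ k ≤ (Mseq ε (n + 1) : ℝ) / 2 ^ (n + 1) ∧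
      (Mseq ε (n + 1) : ℝ) / 2 ^ (n + 1) < ((Mseq ε k : ℝ) + 1) / 2 ^ k := by
    constructor
    · rw [div_le_div_iff₀ hpk hpN, hsplit]
      calc (Mseq ε k : ℝ) * (2 ^ k * 2 ^ (n + 1 - k))
          = ((Mseq ε k : ℝ) * 2 ^ (n + 1 - k)) * 2 ^ k := by ring
        _ ≤ (Mseq ε (n + 1) : ℝ) * 2 ^ k :=
            mul_le_mul_of_nonneg_right h1 (le_of_lt hpk)
    · rw [div_lt_div_iff₀ hpN hpk, hsplit]
      calc (Mseq ε (n + 1) : ℝ) * 2 ^ k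
          < (((Mseq ε k : ℝ) + 1) * 2 ^ (n + 1 - k)) * 2 ^ k :=
            mul_lt_mul_of_pos_right h2 hpk
        _ = ((Mseq ε k : ℝ) + 1) * (2 ^ k * 2 ^ (n + 1 - k)) := by ring
  have hs2 := Mseq_sandwich ε (k + 1) (n - k)
  have hkk2 : (k + 1) + (n - k) = n + 1 := by omega
  rw [hkk2] at hs2
  have heq : Mseq ε (k + 1) = 2 * Mseq ε k + (if ε k (Mseq ε k) 0 = 1 then 0 else 1) := rfl
  rcases hε k (Mseq ε k) 0 with hE | hE
  · have hb : Mseq ε (k + 1) = 2 * Mseq ε k := by rw [heq, if_pos hE]; omega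
    rw [hb] at hs2
    have h3 : (Mseq ε (n + 1) : ℝ) < (2 * (Mseq ε k : ℝ) + 1) * 2 ^ (n - k) := by
      have := hs2.2; push_cast at this ⊢; exact_mod_cast this
    have hmid : (Mseq ε (n + 1) : ℝ) / 2 ^ (n + 1) < (2 * (Mseq ε k : ℝ) + 1) / 2 ^ (k + 1) := by
      rw [div_lt_div_iff₀ hpN hpk1, hsplit2]
      calc (Mseq ε (n + 1) : ℝ) * 2 ^ (k + 1)
          < ((2 * (Mseq ε k : ℝ) + 1) * 2 ^ (n - k)) * 2 ^ (k + 1) :=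
            mul_lt_mul_of_pos_right h3 hpk1
        _ = (2 * (Mseq ε k : ℝ) + 1) * (2 ^ (k + 1) * 2 ^ (n - k)) := by ring
    unfold haar
    rw [if_pos hcond, if_pos hmid, hE]
  · have hb : Mseq ε (k + 1) = 2 * Mseq ε k + 1 := by
      rw [heq, if_neg (by rw [hE]; norm_num)]
    rw [hb] at hs2
    have h3 : (2 * (Mseq ε k : ℝ) + 1) * 2 ^ (n - k) ≤ (Mseq ε (n + 1) : ℝ) := by
      have := hs2.1; push_cast at this ⊢; exact_mod_cast this
    have hmid : ¬ ((Mseq ε (n + 1) : ℝ) / 2 ^ (n + 1) < (2 * (Mseq ε k : ℝ) + 1) / 2 ^ (k + 1)) := by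
      rw [not_lt, div_le_div_iff₀ hpk1 hpN, hsplit2]
      calc (2 * (Mseq ε k : ℝ) + 1) * (2 ^ (k + 1) * 2 ^ (n - k))
          = ((2 * (Mseq ε k : ℝ) + 1) * 2 ^ (n - k)) * 2 ^ (k + 1) := by ring
        _ ≤ (Mseq ε (n + 1) : ℝ) * 2 ^ (k + 1) :=
            mul_le_mul_of_nonneg_right h3 (le_of_lt hpk1)
    unfold haar
    rw [if_pos hcond, if_neg hmid, hE]
    norm_num

lemma sbSum_point (n : ℕ) (ε : ℕ → ℕ → ℕ → ℝ)
    (hε : ∀ k m₁ m₂, ε k m₁ m₂ = 1 ∨ ε k m₁ m₂ = -1) :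
    sbSum n ε ((Mseq ε (n + 1) : ℝ) / 2 ^ (n + 1), 0) = n + 1 := by
  have hx : ∀ k, k ≤ n →
      haar k (Mseq ε k) ((Mseq ε (n + 1) : ℝ) / 2 ^ (n + 1)) = -(ε k (Mseq ε k) 0) :=
    fun k hk => haar_Mseq ε hε n k hk
  have hne0 : ∀ k m₁ m₂, ε k m₁ m₂ ≠ 0 := by
    intro k m₁ m₂; rcases hε k m₁ m₂ with h | h <;> rw [h] <;> norm_num
  unfold sbSum
  have hterm : ∀ k ∈ Finset.range (n + 1),
      (∑ m₁ ∈ Finset.range (2 ^ k), ∑ m₂ ∈ Finset.range (2 ^ (n - k)),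
        ε k m₁ m₂ * haar2 k m₁ (n - k) m₂ ((Mseq ε (n + 1) : ℝ) / 2 ^ (n + 1), 0)) = 1 := by
    intro k hk
    have hkn : k ≤ n := by have := Finset.mem_range.mp hk; omega
    have hMne : haar k (Mseq ε k) ((Mseq ε (n + 1) : ℝ) / 2 ^ (n + 1)) ≠ 0 := by
      rw [hx k hkn]
      simpa using hne0 k (Mseq ε k) 0
    rw [Finset.sum_eq_single (Mseq ε k)]
    · rw [Finset.sum_eq_single 0]
      · unfold haar2
        simp only
        rw [hx k hkn, haar_zero_zero]
        rcases hε k (Mseq ε k) 0 with h | h <;> rw [h] <;> norm_num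
      · intro m₂ _ hm₂
        unfold haar2
        simp only
        rw [haar_zero_of_ne _ _ hm₂, mul_zero, mul_zero]
      · intro h
        exact absurd (Finset.mem_range.mpr (Nat.pow_pos (by norm_num))) h
    · intro m₁ _ hm₁
      apply Finset.sum_eq_zero
      intro m₂ _
      have h0 : haar k m₁ ((Mseq ε (n + 1) : ℝ) / 2 ^ (n + 1)) = 0 := by
        by_contra h0
        exact hm₁ (haar_unique h0 hMne)
      unfold haar2
      simp only
      rw [h0, zero_mul, mul_zero]
    · intro h
      exact absurd (Finset.mem_range.mpr (Mseq_lt ε k)) h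
  rw [Finset.sum_congr rfl hterm]
  simp

theorem signed_small_ball_sup_eq (n : ℕ) (ε : ℕ → ℕ → ℕ → ℝ)
    (hε : ∀ k m₁ m₂, ε k m₁ m₂ = 1 ∨ ε k m₁ m₂ = -1) :
    sSup ((fun p => |sbSum n ε p|) '' unitSq) = n + 1 := by
  have hub : ∀ y ∈ (fun p => |sbSum n ε p|) '' unitSq, y ≤ n + 1 := by
    rintro y ⟨p, -, rfl⟩
    exact sbSum_abs_le n ε hε p
  have hxmem : ((Mseq ε (n + 1) : ℝ) / 2 ^ (n + 1), (0 : ℝ)) ∈ unitSq := by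
    constructor
    · constructor
      · positivity
      · rw [div_lt_one (by positivity)]
        exact_mod_cast Mseq_lt ε (n + 1)
    · exact ⟨le_refl 0, by norm_num⟩
  have hmem : (n + 1 : ℝ) ∈ (fun p => |sbSum n ε p|) '' unitSq := by
    refine ⟨((Mseq ε (n + 1) : ℝ) / 2 ^ (n + 1), 0), hxmem, ?_⟩
    simp only
    rw [sbSum_point n ε hε, abs_of_nonneg (by positivity)]
  apply le_antisymm
  · exact Real.sSup_le hub (by positivity)
  · exact le_csSup ⟨n + 1, fun y hy => hub y hy⟩ hmem
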